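/- The domination relation ≺ amongst equivalence classes of regular wiretap sets (under the equivalence ∼ of sharing a common minimum cut from s) is a strict partial order: it is irreflexive and transitive. -/

import Mathlib

open Finset

/-- Consecutive edges in the list match head-to-tail. -/
def EChain {V E : Type*} (tl hd : E → V) (p : List E) : Prop :=
  p.Chain' (fun d e => hd d = tl e)

/-- A (nonempty) directed path of edges starting at node `s`. -/
def PathFrom {V E : Type*} (tl hd : E → V) (s : V) (p : List E) : Prop :=
  p ≠ [] ∧ EChain tl hd p ∧ ∀ e ∈ p.head?, tl e = s

/-- The directed graph is acyclic: no nonempty edge-chain returns to its start. -/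
def Acyclic {V E : Type*} (tl hd : E → V) : Prop :=
  ∀ p : List E, p ≠ [] → EChain tl hd p →
    ∀ d ∈ p.head?, ∀ e ∈ p.getLast?, hd e ≠ tl d

/-- `B` separates the edge set `A` from `s`: every directed path from `s`
ending with an edge of `A` passes through an edge of `B` (i.e. `B` is a cut
between `s` and `A`). -/
def Separates {V E : Type*} (tl hd : E → V) (s : V) (A B : Finset E) : Prop :=
  ∀ p : List E, PathFrom tl hd s p → (∃ e ∈ p.getLast?, e ∈ A) → ∃ b ∈ B, b ∈ p

/-- The minimum cut capacity between `s` and the edge set `A`. -/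
noncomputable def mincut {V E : Type*} [Fintype E] (tl hd : E → V) (s : V)
    (A : Finset E) : ℕ :=
  sInf {n | ∃ B : Finset E, Separates tl hd s A B ∧ B.card = n}

/-- `B` is a minimum cut between `s` and the edge set `A`. -/
def IsMinCut {V E : Type*} [Fintype E] (tl hd : E → V) (s : V) (A B : Finset E) : Prop :=
  Separates tl hd s A B ∧ B.card = mincut tl hd s A

/-- An edge set is regular if its cardinality equals its minimum cut capacity from `s`. -/
def Regular {V E : Type*} [Fintype E] (tl hd : E → V) (s : V) (A : Finset E) : Prop :=
  A.card = mincut tl hd s A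

/-- `A ∼ A'`: the two edge sets have a common minimum cut from `s`. -/
def EquivSets {V E : Type*} [Fintype E] (tl hd : E → V) (s : V) (A A' : Finset E) : Prop :=
  ∃ C : Finset E, IsMinCut tl hd s A C ∧ IsMinCut tl hd s A' C

/-- `A₁ ≺ A₂`: `|A₁| < |A₂|` and some minimum cut between `s` and `A₂`
also separates `A₁` from `s`. -/
def Dominates {V E : Type*} [Fintype E] (tl hd : E → V) (s : V) (A₁ A₂ : Finset E) : Prop :=
  A₁.card < A₂.card ∧
    ∃ C : Finset E, IsMinCut tl hd s A₂ C ∧ Separates tl hd s A₁ C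

/-- A directed path of edges from node `s` to node `t`. -/
def NPathFromTo {V E : Type*} (tl hd : E → V) (s t : V) (p : List E) : Prop :=
  PathFrom tl hd s p ∧ ∀ e ∈ p.getLast?, hd e = t

/-- `B` is a cut between the nodes `s` and `t`. -/
def NSeparates {V E : Type*} (tl hd : E → V) (s t : V) (B : Finset E) : Prop :=
  ∀ p : List E, NPathFromTo tl hd s t p → ∃ b ∈ B, b ∈ p

/-- The minimum cut capacity between the nodes `s` and `t`. -/
noncomputable def nmincut {V E : Type*} [Fintype E] (tl hd : E → V) (s t : V) : ℕ :=
  sInf {n | ∃ B : Finset E, NSeparates tl hd s t B ∧ B.card = n}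

/-- `B` is a minimum cut between the nodes `s` and `t`. -/
def IsNodeMinCut {V E : Type*} [Fintype E] (tl hd : E → V) (s t : V) (B : Finset E) : Prop :=
  NSeparates tl hd s t B ∧ B.card = nmincut tl hd s t

/-- `d ≤ e` for edges: there is a directed path starting with `d` and ending with `e`
(in particular `d ≤ d`). -/
def EdgeLe {V E : Type*} (tl hd : E → V) (d e : E) : Prop :=
  ∃ p : List E, EChain tl hd p ∧ p.head? = some d ∧ p.getLast? = some e

/-- A family of pairwise edge-disjoint paths. -/
def EdgeDisjoint {E : Type*} {n : ℕ} (P : Fin n → List E) : Prop :=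
  ∀ i j, i ≠ j → List.Disjoint (P i) (P j)

/-- The primary minimum cut between nodes `s` and `t`: a minimum cut separating
every minimum cut between `s` and `t` from `s`. -/
def IsPrimaryNodeMinCut {V E : Type*} [Fintype E] (tl hd : E → V) (s t : V)
    (C : Finset E) : Prop :=
  IsNodeMinCut tl hd s t C ∧
    ∀ C' : Finset E, IsNodeMinCut tl hd s t C' → Separates tl hd s C' C

/-- The primary minimum cut between `s` and an edge set `A`. -/
def IsPrimaryMinCut {V E : Type*} [Fintype E] (tl hd : E → V) (s : V)
    (A C : Finset E) : Prop :=
  IsMinCut tl hd s A C ∧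
    ∀ C' : Finset E, IsMinCut tl hd s A C' → Separates tl hd s C' C

/-- The equivalence class (within the collection `𝒜`) of the wiretap set `A`
under the relation `∼`. -/
def ClassOf {V E : Type*} [Fintype E] (tl hd : E → V) (s : V)
    (𝒜 : Finset (Finset E)) (A : Finset E) : Set (Finset E) :=
  {A' | A' ∈ 𝒜 ∧ EquivSets tl hd s A A'}

/-- Domination amongst (distinct) equivalence classes: some common minimum cut of all
the sets in `C₂` separates every set in `C₁` from `s`. -/
def ClDominates {V E : Type*} [Fintype E] (tl hd : E → V) (s : V)
    (C₁ C₂ : Set (Finset E)) : Prop :=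
  C₁ ≠ C₂ ∧ ∃ CUT : Finset E,
    (∀ A ∈ C₂, IsMinCut tl hd s A CUT) ∧ (∀ A ∈ C₁, Separates tl hd s A CUT)

open scoped Classical

set_option linter.unusedSectionVars false

section Aux

variable {V E : Type*} [Fintype E] {tl hd : E → V} {s : V}

lemma sep_univ (A : Finset E) : Separates tl hd s A Finset.univ := by
  rintro p ⟨hne, -, -⟩ -
  obtain ⟨e, he⟩ := List.exists_mem_of_ne_nil p hne
  exact ⟨e, Finset.mem_univ _, he⟩

lemma exists_isMinCut (A : Finset E) : ∃ B, IsMinCut tl hd s A B := by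
  have hmem : mincut tl hd s A ∈ {n | ∃ B : Finset E, Separates tl hd s A B ∧ B.card = n} :=
    Nat.sInf_mem ⟨_, ⟨Finset.univ, sep_univ A, rfl⟩⟩
  obtain ⟨B, h1, h2⟩ := hmem
  exact ⟨B, h1, h2⟩

lemma mincut_le {A B : Finset E} (h : Separates tl hd s A B) :
    mincut tl hd s A ≤ B.card :=
  Nat.sInf_le ⟨B, h, rfl⟩

lemma sep_mono {A B B' : Finset E} (h : Separates tl hd s A B) (hBB : B ⊆ B') :
    Separates tl hd s A B' := by
  intro p hp hA
  obtain ⟨b, hb, hbp⟩ := h p hp hA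
  exact ⟨b, hBB hb, hbp⟩

lemma sep_of_subset {A S : Finset E} (h : A ⊆ S) : Separates tl hd s A S := by
  rintro p hp ⟨e, he, heA⟩
  exact ⟨e, h heA, List.mem_of_mem_getLast? he⟩

lemma pathFrom_prefix {p₁ p₂ : List E} {e : E}
    (h : PathFrom tl hd s (p₁ ++ e :: p₂)) : PathFrom tl hd s (p₁ ++ [e]) := by
  obtain ⟨hne, hch, hhd⟩ := h
  rw [EChain, List.Chain', List.isChain_append] at hch
  obtain ⟨h1, h2, h3⟩ := hch
  refine ⟨by simp, ?_, ?_⟩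
  · rw [EChain, List.Chain', List.isChain_append]
    exact ⟨h1, List.isChain_singleton _, fun x hx y hy => h3 x hx y (by simpa using hy)⟩
  · intro x hx
    apply hhd
    rcases List.eq_nil_or_concat p₁ with h | h
    · subst h; simpa using hx
    · obtain ⟨l, a, rfl⟩ := h
      rw [List.head?_append_of_ne_nil _ (by simp)] at hx ⊢
      exact hx

lemma sep_trans {A B C : Finset E} (hAB : Separates tl hd s A B)
    (hBC : Separates tl hd s B C) : Separates tl hd s A C := by
  intro p hp hA
  obtain ⟨b, hbB, hbp⟩ := hAB p hp hA
  obtain ⟨p₁, p₂, rfl⟩ := List.append_of_mem hbp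
  obtain ⟨c, hcC, hcq⟩ := hBC (p₁ ++ [b]) (pathFrom_prefix hp)
    ⟨b, by simp [List.getLast?_concat], hbB⟩
  refine ⟨c, hcC, ?_⟩
  rcases List.mem_append.mp hcq with h | h
  · exact List.mem_append.mpr (Or.inl h)
  · simp only [List.mem_singleton] at h
    subst h; exact List.mem_append.mpr (Or.inr List.mem_cons_self)

/-- first occurrence split -/
lemma first_split {S : Finset E} :
    ∀ {l : List E}, (∃ x ∈ l, x ∈ S) →
      ∃ p₁ e p₂, l = p₁ ++ e :: p₂ ∧ e ∈ S ∧ ∀ x ∈ p₁, x ∉ S := by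
  intro l
  induction l with
  | nil => rintro ⟨x, hx, -⟩; simp at hx
  | cons a t ih =>
    rintro ⟨x, hx, hxS⟩
    by_cases haS : a ∈ S
    · exact ⟨[], a, t, rfl, haS, by simp⟩
    · rcases List.mem_cons.mp hx with rfl | hxt
      · exact absurd hxS haS
      · obtain ⟨p₁, e, p₂, rfl, heS, hcl⟩ := ih ⟨x, hxt, hxS⟩
        exact ⟨a :: p₁, e, p₂, rfl, heS, by
          intro y hy
          rcases List.mem_cons.mp hy with rfl | hy
          · exact haS
          · exact hcl y hy⟩

/-- last occurrence split -/
lemma last_split {S : Finset E} :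
    ∀ {l : List E}, (∃ x ∈ l, x ∈ S) →
      ∃ p₁ e p₂, l = p₁ ++ e :: p₂ ∧ e ∈ S ∧ ∀ x ∈ p₂, x ∉ S := by
  intro l
  induction l with
  | nil => rintro ⟨x, hx, -⟩; simp at hx
  | cons a t ih =>
    rintro ⟨x, hx, hxS⟩
    by_cases ht : ∃ y ∈ t, y ∈ S
    · obtain ⟨p₁, e, p₂, rfl, heS, hcl⟩ := ih ht
      exact ⟨a :: p₁, e, p₂, rfl, heS, hcl⟩
    · rcases List.mem_cons.mp hx with rfl | hxt
      · exact ⟨[], x, t, rfl, hxS, fun y hy hyS => ht ⟨y, hy, hyS⟩⟩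
      · exact absurd ⟨x, hxt, hxS⟩ ht

/-- the edges of `S` reachable from `s` by an `S`-clean path. -/
noncomputable def frontierS (tl hd : E → V) (s : V) (S : Finset E) : Finset E :=
  Finset.univ.filter (fun e => e ∈ S ∧
    ∃ p₁ : List E, PathFrom tl hd s (p₁ ++ [e]) ∧ ∀ x ∈ p₁, x ∉ S)

/-- the edges of `S` which are the last `S`-edge of some path from `s` to `A`. -/
noncomputable def jsetS (tl hd : E → V) (s : V) (S A : Finset E) : Finset E :=
  Finset.univ.filter (fun e => e ∈ S ∧
    ∃ p₁ p₂ : List E, PathFrom tl hd s (p₁ ++ e :: p₂) ∧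
      (∃ a ∈ (p₁ ++ e :: p₂).getLast?, a ∈ A) ∧ ∀ x ∈ p₂, x ∉ S)

lemma frontier_subset {S : Finset E} : frontierS tl hd s S ⊆ S := by
  intro e he
  exact ((Finset.mem_filter.mp he).2).1

lemma jset_subset {S A : Finset E} : jsetS tl hd s S A ⊆ S := by
  intro e he
  exact ((Finset.mem_filter.mp he).2).1

lemma sep_frontier {A S : Finset E} (h : Separates tl hd s A S) :
    Separates tl hd s A (frontierS tl hd s S) := by
  intro p hp hA
  obtain ⟨x, hxS, hxp⟩ := h p hp hA
  obtain ⟨p₁, e, p₂, rfl, heS, hcl⟩ := first_split ⟨x, hxp, hxS⟩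
  refine ⟨e, ?_, by simp⟩
  rw [frontierS, Finset.mem_filter]
  exact ⟨Finset.mem_univ _, heS, p₁, pathFrom_prefix hp, hcl⟩

lemma sep_jset {A S : Finset E} (h : Separates tl hd s A S) :
    Separates tl hd s A (jsetS tl hd s S A) := by
  intro p hp hA
  obtain ⟨x, hxS, hxp⟩ := h p hp hA
  obtain ⟨p₁, e, p₂, rfl, heS, hcl⟩ := last_split ⟨x, hxp, hxS⟩
  refine ⟨e, ?_, by simp⟩
  rw [jsetS, Finset.mem_filter]
  exact ⟨Finset.mem_univ _, heS, p₁, p₂, hp, hA, hcl⟩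

lemma frontier_inter_jset {P Q A : Finset E} (hP : Separates tl hd s A P)
    (hQ : Separates tl hd s A Q) :
    frontierS tl hd s (P ∪ Q) ∩ jsetS tl hd s (P ∪ Q) A ⊆ P ∩ Q := by
  intro e he
  rw [Finset.mem_inter] at he
  obtain ⟨heM, heJ⟩ := he
  rw [frontierS, Finset.mem_filter] at heM
  rw [jsetS, Finset.mem_filter] at heJ
  obtain ⟨-, heS, p₁, hp₁, hcl₁⟩ := heM
  obtain ⟨-, -, q₁, q₂, hq, hqA, hcl₂⟩ := heJ
  -- splice: r = p₁ ++ e :: q₂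
  have hch : EChain tl hd (p₁ ++ e :: q₂) := by
    obtain ⟨-, hch1, -⟩ := hp₁
    obtain ⟨-, hch2, -⟩ := hq
    rw [EChain, List.Chain', List.isChain_append] at hch1 hch2 ⊢
    exact ⟨hch1.1, hch2.2.1, fun x hx y hy => hch1.2.2 x hx y (by simpa using hy)⟩
  have hr : PathFrom tl hd s (p₁ ++ e :: q₂) := by
    obtain ⟨-, -, hhd⟩ := hp₁
    refine ⟨by simp, hch, ?_⟩
    intro x hx
    apply hhd
    rcases List.eq_nil_or_concat p₁ with h | h
    · subst h; simpa using hx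
    · obtain ⟨l, a, rfl⟩ := h
      rw [List.head?_append_of_ne_nil _ (by simp)] at hx ⊢
      exact hx
  have hrA : ∃ a ∈ (p₁ ++ e :: q₂).getLast?, a ∈ A := by
    obtain ⟨a, ha, haA⟩ := hqA
    refine ⟨a, ?_, haA⟩
    rw [List.getLast?_append_cons] at ha ⊢
    exact ha
  have key : ∀ {X : Finset E}, X ⊆ P ∪ Q → Separates tl hd s A X → e ∈ X := by
    intro X hXsub hX
    obtain ⟨b, hbX, hbr⟩ := hX _ hr hrA
    have hbS : b ∈ P ∪ Q := hXsub hbX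
    rcases List.mem_append.mp hbr with h | h
    · exact absurd hbS (hcl₁ b h)
    · rcases List.mem_cons.mp h with rfl | h
      · exact hbX
      · exact absurd hbS (hcl₂ b h)
  exact Finset.mem_inter.mpr ⟨key Finset.subset_union_left hP,
    key Finset.subset_union_right hQ⟩

lemma card_frontier_add_card_jset {P Q A : Finset E} (hP : Separates tl hd s A P)
    (hQ : Separates tl hd s A Q) :
    (frontierS tl hd s (P ∪ Q)).card + (jsetS tl hd s (P ∪ Q) A).card ≤ P.card + Q.card := by
  set M := frontierS tl hd s (P ∪ Q)
  set J := jsetS tl hd s (P ∪ Q) A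
  have h1 : M.card + J.card = (M ∪ J).card + (M ∩ J).card :=
    (Finset.card_union_add_card_inter M J).symm
  have h2 : (M ∪ J).card ≤ (P ∪ Q).card :=
    Finset.card_le_card (Finset.union_subset frontier_subset jset_subset)
  have h3 : (M ∩ J).card ≤ (P ∩ Q).card :=
    Finset.card_le_card (frontier_inter_jset hP hQ)
  have h4 : (P ∪ Q).card + (P ∩ Q).card = P.card + Q.card :=
    Finset.card_union_add_card_inter P Q
  omega

lemma exists_primary (A : Finset E) :
    ∃ P, IsMinCut tl hd s A P ∧ ∀ D, IsMinCut tl hd s A D → Separates tl hd s D P := by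
  suffices h : ∀ l : List (Finset E), ∃ P, IsMinCut tl hd s A P ∧
      ∀ D ∈ l, IsMinCut tl hd s A D → Separates tl hd s D P by
    obtain ⟨P, h1, h2⟩ := h (Finset.univ : Finset (Finset E)).toList
    exact ⟨P, h1, fun D hD => h2 D (by simp [Finset.mem_toList]) hD⟩
  intro l
  induction l with
  | nil =>
    obtain ⟨B, hB⟩ := exists_isMinCut A
    exact ⟨B, hB, by simp⟩
  | cons D l ih =>
    obtain ⟨P, hP, hPl⟩ := ih
    by_cases hD : IsMinCut tl hd s A D
    · have hAS : Separates tl hd s A (P ∪ D) := sep_mono hP.1 Finset.subset_union_left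
      have hAM : Separates tl hd s A (frontierS tl hd s (P ∪ D)) := sep_frontier hAS
      have hAJ : Separates tl hd s A (jsetS tl hd s (P ∪ D) A) := sep_jset hAS
      have hcnt := card_frontier_add_card_jset hP.1 hD.1
      have hJ := mincut_le hAJ
      have hMle : (frontierS tl hd s (P ∪ D)).card ≤ mincut tl hd s A := by
        rw [hP.2, hD.2] at hcnt; omega
      have hM : IsMinCut tl hd s A (frontierS tl hd s (P ∪ D)) :=
        ⟨hAM, le_antisymm hMle (mincut_le hAM)⟩
      refine ⟨frontierS tl hd s (P ∪ D), hM, ?_⟩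
      intro D' hD' hmc
      rcases List.mem_cons.mp hD' with rfl | hD'l
      · exact sep_frontier (sep_of_subset Finset.subset_union_right)
      · exact sep_trans (hPl D' hD'l hmc)
          (sep_frontier (sep_of_subset Finset.subset_union_left))
    · refine ⟨P, hP, ?_⟩
      intro D' hD' hmc
      rcases List.mem_cons.mp hD' with rfl | hD'l
      · exact absurd hmc hD
      · exact hPl D' hD'l hmc

lemma isMinCut_of_equiv {A X P : Finset E} (hP : IsMinCut tl hd s A P)
    (hprim : ∀ D, IsMinCut tl hd s A D → Separates tl hd s D P)
    (h : EquivSets tl hd s A X) : IsMinCut tl hd s X P := by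
  obtain ⟨D, hDA, hDX⟩ := h
  refine ⟨sep_trans hDX.1 (hprim D hDA), ?_⟩
  rw [hP.2, ← hDA.2, hDX.2]

lemma equiv_refl (A : Finset E) : EquivSets tl hd s A A := by
  obtain ⟨B, hB⟩ := exists_isMinCut A
  exact ⟨B, hB, hB⟩

lemma equiv_symm {A B : Finset E} (h : EquivSets tl hd s A B) : EquivSets tl hd s B A := by
  obtain ⟨C, h1, h2⟩ := h
  exact ⟨C, h2, h1⟩

lemma equiv_trans {A B C : Finset E} (h1 : EquivSets tl hd s A B)
    (h2 : EquivSets tl hd s B C) : EquivSets tl hd s A C := by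
  obtain ⟨P, hP, hprim⟩ := exists_primary B
  exact ⟨P, isMinCut_of_equiv hP hprim (equiv_symm h1), isMinCut_of_equiv hP hprim h2⟩

lemma mincut_eq_of_equiv {A B : Finset E} (h : EquivSets tl hd s A B) :
    mincut tl hd s A = mincut tl hd s B := by
  obtain ⟨C, h1, h2⟩ := h
  rw [← h1.2, h2.2]

end Aux

section Main

variable {V E : Type*} [Fintype E] {tl hd : E → V} {s : V}

lemma classOf_eq_of_equiv {𝒜 : Finset (Finset E)} {A A' : Finset E}
    (h : EquivSets tl hd s A A') :
    ClassOf tl hd s 𝒜 A = ClassOf tl hd s 𝒜 A' := by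
  ext X
  simp only [ClassOf, Set.mem_setOf_eq]
  exact ⟨fun ⟨hm, he⟩ => ⟨hm, equiv_trans (equiv_symm h) he⟩,
    fun ⟨hm, he⟩ => ⟨hm, equiv_trans h he⟩⟩

lemma mem_classOf_self {𝒜 : Finset (Finset E)} {A : Finset E} (hA : A ∈ 𝒜) :
    A ∈ ClassOf tl hd s 𝒜 A :=
  ⟨hA, equiv_refl A⟩

end Main

theorem clDominates_strictPartialOrder' {V E : Type*} [Fintype E]
    (tl hd : E → V) (s : V)
    (𝒜 : Finset (Finset E)) :
    (∀ A ∈ 𝒜, ¬ ClDominates tl hd s (ClassOf tl hd s 𝒜 A) (ClassOf tl hd s 𝒜 A)) ∧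
    (∀ A₁ ∈ 𝒜, ∀ A₂ ∈ 𝒜, ∀ A₃ ∈ 𝒜,
      ClDominates tl hd s (ClassOf tl hd s 𝒜 A₁) (ClassOf tl hd s 𝒜 A₂) →
      ClDominates tl hd s (ClassOf tl hd s 𝒜 A₂) (ClassOf tl hd s 𝒜 A₃) →
      ClDominates tl hd s (ClassOf tl hd s 𝒜 A₁) (ClassOf tl hd s 𝒜 A₃)) := by
  constructor
  · rintro A hA ⟨hne, -⟩
    exact hne rfl
  · rintro A₁ h1 A₂ h2 A₃ h3 ⟨hne12, B, hBmin, hBsep⟩ ⟨hne23, C, hCmin, hCsep⟩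
    have hA1c : A₁ ∈ ClassOf tl hd s 𝒜 A₁ := mem_classOf_self h1
    have hA2c : A₂ ∈ ClassOf tl hd s 𝒜 A₂ := mem_classOf_self h2
    have hA3c : A₃ ∈ ClassOf tl hd s 𝒜 A₃ := mem_classOf_self h3
    have hBA₂ : IsMinCut tl hd s A₂ B := hBmin A₂ hA2c
    have hBA₁ : Separates tl hd s A₁ B := hBsep A₁ hA1c
    have hCA₃ : IsMinCut tl hd s A₃ C := hCmin A₃ hA3c
    have hCA₂ : Separates tl hd s A₂ C := hCsep A₂ hA2c
    -- strict chain of min cut capacities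
    have h12 : mincut tl hd s A₁ < mincut tl hd s A₂ := by
      have hle : mincut tl hd s A₁ ≤ B.card := mincut_le hBA₁
      rw [hBA₂.2] at hle
      refine lt_of_le_of_ne hle (fun heq => hne12 ?_)
      exact classOf_eq_of_equiv ⟨B, ⟨hBA₁, by rw [hBA₂.2, ← heq]⟩, hBA₂⟩
    have h23 : mincut tl hd s A₂ < mincut tl hd s A₃ := by
      have hle : mincut tl hd s A₂ ≤ C.card := mincut_le hCA₂
      rw [hCA₃.2] at hle
      refine lt_of_le_of_ne hle (fun heq => hne23 ?_)
      exact classOf_eq_of_equiv ⟨C, ⟨hCA₂, by rw [hCA₃.2, ← heq]⟩, hCA₃⟩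
    refine ⟨?_, ?_⟩
    · -- classes are distinct
      intro heq
      have : A₁ ∈ ClassOf tl hd s 𝒜 A₃ := heq ▸ hA1c
      have h31 : EquivSets tl hd s A₃ A₁ := this.2
      have := mincut_eq_of_equiv h31
      omega
    · obtain ⟨P₃, hP₃, hprim⟩ := exists_primary A₃
      refine ⟨P₃, fun X hX => isMinCut_of_equiv hP₃ hprim hX.2, fun X hX => ?_⟩
      -- the meet `M` of `B` and `C` over paths to `A₂` is a min cut of `A₃`
      -- that separates `B` from `s`
      have hA₂S : Separates tl hd s A₂ (B ∪ C) :=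
        sep_mono hBA₂.1 Finset.subset_union_left
      have hA₃M : Separates tl hd s A₃ (frontierS tl hd s (B ∪ C)) :=
        sep_frontier (sep_mono hCA₃.1 Finset.subset_union_right)
      have hMcard : (frontierS tl hd s (B ∪ C)).card ≤ mincut tl hd s A₃ := by
        have hJ : Separates tl hd s A₂ (jsetS tl hd s (B ∪ C) A₂) := sep_jset hA₂S
        have h6 := card_frontier_add_card_jset hBA₂.1 hCA₂
        have h7 := mincut_le hJ
        rw [hBA₂.2, hCA₃.2] at h6
        omega
      have hMmin : IsMinCut tl hd s A₃ (frontierS tl hd s (B ∪ C)) :=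
        ⟨hA₃M, le_antisymm hMcard (mincut_le hA₃M)⟩
      have hBM : Separates tl hd s B (frontierS tl hd s (B ∪ C)) :=
        sep_frontier (sep_of_subset Finset.subset_union_left)
      exact sep_trans (sep_trans (hBsep X hX) hBM) (hprim _ hMmin)

/-- the domination relation `≺` amongst equivalence classes of
regular wiretap sets is a strict partial order: irreflexive and transitive. -/
theorem clDominates_strictPartialOrder {V E : Type*} [Fintype E]
    (tl hd : E → V) (s : V)
    (hacy : Acyclic tl hd) (hsrc : ∀ e : E, hd e ≠ s)
    (𝒜 : Finset (Finset E)) (hreg : ∀ A ∈ 𝒜, Regular tl hd s A) :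
    (∀ A ∈ 𝒜, ¬ ClDominates tl hd s (ClassOf tl hd s 𝒜 A) (ClassOf tl hd s 𝒜 A)) ∧
    (∀ A₁ ∈ 𝒜, ∀ A₂ ∈ 𝒜, ∀ A₃ ∈ 𝒜,
      ClDominates tl hd s (ClassOf tl hd s 𝒜 A₁) (ClassOf tl hd s 𝒜 A₂) →
      ClDominates tl hd s (ClassOf tl hd s 𝒜 A₂) (ClassOf tl hd s 𝒜 A₃) →
      ClDominates tl hd s (ClassOf tl hd s 𝒜 A₁) (ClassOf tl hd s 𝒜 A₃)) :=
  clDominates_strictPartialOrder' tl hd s 𝒜
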